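/- Derivatives of iterated Lie derivatives at steady states (equation (9) in the proof of Proposition 5). Let w : ℝ^m → ℝ^n be continuously differentiable with f(w(u),u) = 0 for all u ∈ ℝ^m. Fix u* ∈ ℝ^m and set x* := w(u*), A := (∂f/∂x)(x*,u*) and W := (∂w/∂u)(u*). Then for every i ∈ {0, 1, …, r}: (∂(L_f^i h)/∂x)(x*,u*) = (∇h(x*))^T ∘ A^i (as a linear functional on ℝ^n), and for every i ∈ {1, …, r}: (∂(L_f^i h)/∂u)(x*,u*) = −(∇h(x*))^T ∘ A^i ∘ W (as a linear functional on ℝ^m); equivalently, ((∂(L_f^r h)/∂u)(x*,u*))^T = −W^T·A^r·∇h(x*). -/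

import Mathlib

open Set ContinuousLinearMap
open scoped RealInnerProductSpace

/-- Iterated Lie derivatives `L_f^i h`. -/
noncomputable def lieD {n m : ℕ}
    (f : EuclideanSpace ℝ (Fin n) × EuclideanSpace ℝ (Fin m) → EuclideanSpace ℝ (Fin n))
    (h : EuclideanSpace ℝ (Fin n) → ℝ) :
    ℕ → EuclideanSpace ℝ (Fin n) × EuclideanSpace ℝ (Fin m) → ℝ
  | 0 => fun p => h p.1
  | i + 1 => fun p => fderiv ℝ (fun x => lieD f h i (x, p.2)) p.1 (f p)

section aux

variable {E F G : Type*} [NormedAddCommGroup E] [NormedSpace ℝ E]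
  [NormedAddCommGroup F] [NormedSpace ℝ F] [NormedAddCommGroup G] [NormedSpace ℝ G]

theorem partial_fst' {g : E × F → G} {a : E} {c : F} (hg : DifferentiableAt ℝ g (a, c)) :
    fderiv ℝ (fun x => g (x, c)) a = (fderiv ℝ g (a, c)).comp (inl ℝ E F) :=
  (hg.hasFDerivAt.comp a (hasFDerivAt_prodMk_left a c)).fderiv

theorem partial_snd' {g : E × F → G} {a : E} {c : F} (hg : DifferentiableAt ℝ g (a, c)) :
    fderiv ℝ (fun u => g (a, u)) c = (fderiv ℝ g (a, c)).comp (inr ℝ E F) :=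
  (hg.hasFDerivAt.comp c (hasFDerivAt_prodMk_right a c)).fderiv

end aux

variable {n m : ℕ}
  {f : EuclideanSpace ℝ (Fin n) × EuclideanSpace ℝ (Fin m) → EuclideanSpace ℝ (Fin n)}
  {h : EuclideanSpace ℝ (Fin n) → ℝ}

theorem lieD_succ_eq (i : ℕ) (hg : Differentiable ℝ (lieD f h i)) :
    lieD f h (i + 1) = fun p => fderiv ℝ (lieD f h i) p (f p, 0) := by
  funext p
  show fderiv ℝ (fun x => lieD f h i (x, p.2)) p.1 (f p) = _
  rw [partial_fst' (hg _)]
  rfl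

theorem lieD_contDiff {r : ℕ} (hf : ContDiff ℝ (r + 1 : ℕ) f) (hh : ContDiff ℝ (r + 2 : ℕ) h) :
    ∀ i ≤ r + 1, ContDiff ℝ ((r + 2 - i : ℕ)) (lieD f h i) := by
  intro i
  induction i with
  | zero => intro _; exact hh.comp contDiff_fst
  | succ i ih =>
    intro hi
    have hi' : i ≤ r + 1 := by omega
    have IH := ih hi'
    have hdiff : Differentiable ℝ (lieD f h i) := by
      apply IH.differentiable
      exact_mod_cast (show r + 2 - i ≠ 0 by omega)
    rw [lieD_succ_eq i hdiff]
    have h1 : ContDiff ℝ ((r + 1 - i : ℕ)) (fun p => fderiv ℝ (lieD f h i) p) := by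
      apply IH.fderiv_right
      have h3 : (r + 1 - i) + 1 = r + 2 - i := by omega
      apply le_of_eq
      rw [← h3]
      push_cast
      ring
    have h2 : ContDiff ℝ ((r + 1 - i : ℕ))
        (fun p : EuclideanSpace ℝ (Fin n) × EuclideanSpace ℝ (Fin m) =>
          ((f p, 0) : EuclideanSpace ℝ (Fin n) × EuclideanSpace ℝ (Fin m))) := by
      refine (ContDiff.prodMk (hf.of_le ?_) contDiff_const)
      exact_mod_cast Nat.sub_le_iff_le_add.mpr (by omega)
    have := h1.clm_apply h2
    have he : r + 2 - (i + 1) = r + 1 - i := by omega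
    rw [he]
    exact this

/-- Derivatives of iterated Lie derivatives at steady states (equation (9) in the proof of
Proposition 5): with `A := (∂f/∂x)(x*,u*)` and `W := (∂w/∂u)(u*)`, one has
`(∂(L_f^i h)/∂x)(x*,u*) = (∇h(x*))ᵀ ∘ Aⁱ` for `i ≤ r` and
`(∂(L_f^i h)/∂u)(x*,u*) = −(∇h(x*))ᵀ ∘ Aⁱ ∘ W` for `1 ≤ i ≤ r`; equivalently, in transposed
form, `((∂(L_f^r h)/∂u)(x*,u*))ᵀ = −Wᵀ (Aʳ)ᵀ ∇h(x*)`. -/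
theorem lie_derivatives_at_steady_state
    {n m r : ℕ} (hn : 0 < n) (hm : 0 < m) (hr : 0 < r)
    (f : EuclideanSpace ℝ (Fin n) × EuclideanSpace ℝ (Fin m) → EuclideanSpace ℝ (Fin n))
    (h : EuclideanSpace ℝ (Fin n) → ℝ)
    (hf : ContDiff ℝ (r + 1 : ℕ) f) (hh : ContDiff ℝ (r + 2 : ℕ) h)
    (w : EuclideanSpace ℝ (Fin m) → EuclideanSpace ℝ (Fin n)) (hw : ContDiff ℝ 1 w)
    (hsteady : ∀ u, f (w u, u) = 0)
    (us : EuclideanSpace ℝ (Fin m)) :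
    (∀ i ≤ r,
      fderiv ℝ (fun x => lieD f h i (x, us)) (w us)
        = (fderiv ℝ h (w us)).comp ((fderiv ℝ (fun x => f (x, us)) (w us)) ^ i)) ∧
    (∀ i, 1 ≤ i → i ≤ r →
      fderiv ℝ (fun u => lieD f h i (w us, u)) us
        = -((fderiv ℝ h (w us)).comp
            (((fderiv ℝ (fun x => f (x, us)) (w us)) ^ i).comp (fderiv ℝ w us)))) ∧
    gradient (fun u => lieD f h r (w us, u)) us
      = -(ContinuousLinearMap.adjoint (fderiv ℝ w us))
          ((ContinuousLinearMap.adjoint ((fderiv ℝ (fun x => f (x, us)) (w us)) ^ r))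
            (gradient h (w us))) := by
  have hsm := lieD_contDiff hf hh
  have hdiffAll : ∀ i ≤ r + 1, Differentiable ℝ (lieD f h i) := by
    intro i hi
    exact (hsm i hi).differentiable
      (by exact_mod_cast (show r + 2 - i ≠ 0 by omega))
  set P := fun i => fderiv ℝ (lieD f h i) (w us, us) with hP
  set Df := fderiv ℝ f (w us, us) with hDf
  set A := fderiv ℝ (fun x => f (x, us)) (w us) with hAdef
  set W := fderiv ℝ w us with hW
  have hfdiff : DifferentiableAt ℝ f (w us, us) :=
    (hf.differentiable (by exact_mod_cast (show r + 1 ≠ 0 by omega))) _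
  have hA : A = Df.comp
      (ContinuousLinearMap.inl ℝ (EuclideanSpace ℝ (Fin n)) (EuclideanSpace ℝ (Fin m))) :=
    partial_fst' hfdiff
  have hA' : ∀ v, Df (v, 0) = A v := by
    intro v; rw [hA]; rfl
  have hB' : ∀ v, Df (0, v) = -(A (W v)) := by
    intro v
    have hwd : DifferentiableAt ℝ w us := (hw.differentiable one_ne_zero) us
    have hinner : HasFDerivAt
        (fun u => ((w u, u) : EuclideanSpace ℝ (Fin n) × EuclideanSpace ℝ (Fin m)))
        (W.prod (ContinuousLinearMap.id ℝ (EuclideanSpace ℝ (Fin m)))) us :=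
      hwd.hasFDerivAt.prodMk (hasFDerivAt_id us)
    have hcomp : HasFDerivAt (fun u => f (w u, u))
        (Df.comp (W.prod (ContinuousLinearMap.id ℝ (EuclideanSpace ℝ (Fin m))))) us :=
      HasFDerivAt.comp
        (f := fun u => ((w u, u) : EuclideanSpace ℝ (Fin n) × EuclideanSpace ℝ (Fin m)))
        (g := f) us hfdiff.hasFDerivAt hinner
    have h0 : (fun u => f (w u, u)) = fun _ => (0 : EuclideanSpace ℝ (Fin n)) :=
      funext hsteady
    rw [h0] at hcomp
    have hz : Df.comp (W.prod (ContinuousLinearMap.id ℝ (EuclideanSpace ℝ (Fin m)))) = 0 := by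
      rw [← hcomp.fderiv]; exact fderiv_const_apply 0
    have hzv : Df (W v, v) = 0 := by
      simpa using DFunLike.congr_fun hz v
    have hadd := map_add Df (W v, (0 : EuclideanSpace ℝ (Fin m)))
      ((0 : EuclideanSpace ℝ (Fin n)), v)
    have hsplit : ((W v, (0 : EuclideanSpace ℝ (Fin m)))
        + ((0 : EuclideanSpace ℝ (Fin n)), v)) = (W v, v) := by simp
    rw [hsplit, hzv, hA' (W v)] at hadd
    have hadd' : A (W v) + Df (0, v) = 0 := hadd.symm
    exact eq_neg_of_add_eq_zero_right hadd'
  have key : ∀ i ≤ r, P (i + 1)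
      = (P i).comp (Df.prod (0 : EuclideanSpace ℝ (Fin n) × EuclideanSpace ℝ (Fin m)
          →L[ℝ] EuclideanSpace ℝ (Fin m))) := by
    intro i hi
    have hC := hsm i (by omega)
    have hdiff := hdiffAll i (by omega)
    have hc : ContDiff ℝ ((r + 1 - i : ℕ)) (fderiv ℝ (lieD f h i)) := by
      apply hC.fderiv_right
      have h3 : (r + 1 - i) + 1 = r + 2 - i := by omega
      apply le_of_eq; rw [← h3]; push_cast; ring
    have hcd : DifferentiableAt ℝ (fun p => fderiv ℝ (lieD f h i) p) (w us, us) :=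
      (hc.differentiable (by exact_mod_cast (show r + 1 - i ≠ 0 by omega))) _
    have hu : HasFDerivAt
        (fun p : EuclideanSpace ℝ (Fin n) × EuclideanSpace ℝ (Fin m) =>
          (f p, (0 : EuclideanSpace ℝ (Fin m))))
        (Df.prod 0) (w us, us) :=
      HasFDerivAt.prodMk hfdiff.hasFDerivAt (hasFDerivAt_const (0 : EuclideanSpace ℝ (Fin m)) _)
    have happ := hcd.hasFDerivAt.clm_apply hu
    have hzero : ((f (w us, us), (0 : EuclideanSpace ℝ (Fin m)))
        : EuclideanSpace ℝ (Fin n) × EuclideanSpace ℝ (Fin m)) = 0 := by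
      rw [hsteady us]; rfl
    rw [hzero] at happ
    simp only [map_zero, add_zero] at happ
    have heq : lieD f h (i + 1) = fun p => fderiv ℝ (lieD f h i) p (f p, 0) :=
      lieD_succ_eq i hdiff
    show fderiv ℝ (lieD f h (i + 1)) (w us, us) = _
    rw [heq]
    exact happ.fderiv
  have Px : ∀ i ≤ r + 1, fderiv ℝ (fun x => lieD f h i (x, us)) (w us)
      = (P i).comp
        (ContinuousLinearMap.inl ℝ (EuclideanSpace ℝ (Fin n)) (EuclideanSpace ℝ (Fin m))) :=
    fun i hi => partial_fst' ((hdiffAll i hi) _)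
  have Pu : ∀ i ≤ r + 1, fderiv ℝ (fun u => lieD f h i (w us, u)) us
      = (P i).comp
        (ContinuousLinearMap.inr ℝ (EuclideanSpace ℝ (Fin n)) (EuclideanSpace ℝ (Fin m))) :=
    fun i hi => partial_snd' ((hdiffAll i hi) _)
  have part1 : ∀ i ≤ r,
      fderiv ℝ (fun x => lieD f h i (x, us)) (w us)
        = (fderiv ℝ h (w us)).comp (A ^ i) := by
    intro i
    induction i with
    | zero =>
      intro _
      simp only [pow_zero, ContinuousLinearMap.comp_id]
      rfl
    | succ i ih =>
      intro hi
      have ihh := ih (by omega)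
      rw [Px (i + 1) (by omega), key i (by omega)]
      have hPj : (P i).comp
          (ContinuousLinearMap.inl ℝ (EuclideanSpace ℝ (Fin n)) (EuclideanSpace ℝ (Fin m)))
          = (fderiv ℝ h (w us)).comp (A ^ i) := (Px i (by omega)).symm.trans ihh
      ext v
      have h1 : (((P i).comp (Df.prod 0)).comp
          (ContinuousLinearMap.inl ℝ (EuclideanSpace ℝ (Fin n)) (EuclideanSpace ℝ (Fin m)))) v
          = (P i) (Df (v, 0), 0) := rfl
      rw [h1, hA']
      have h2 : ((P i) ((A v), (0 : EuclideanSpace ℝ (Fin m))))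
          = ((P i).comp (ContinuousLinearMap.inl ℝ (EuclideanSpace ℝ (Fin n))
              (EuclideanSpace ℝ (Fin m)))) (A v) := rfl
      rw [h2, hPj]
      simp [pow_succ, ContinuousLinearMap.mul_apply]
  have part2 : ∀ i, 1 ≤ i → i ≤ r →
      fderiv ℝ (fun u => lieD f h i (w us, u)) us
        = -((fderiv ℝ h (w us)).comp ((A ^ i).comp W)) := by
    intro i h1 h2
    obtain ⟨j, rfl⟩ : ∃ j, i = j + 1 := ⟨i - 1, by omega⟩
    rw [Pu (j + 1) (by omega), key j (by omega)]
    have hPj : (P j).comp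
        (ContinuousLinearMap.inl ℝ (EuclideanSpace ℝ (Fin n)) (EuclideanSpace ℝ (Fin m)))
        = (fderiv ℝ h (w us)).comp (A ^ j) := (Px j (by omega)).symm.trans (part1 j (by omega))
    ext v
    have e1 : (((P j).comp (Df.prod 0)).comp
        (ContinuousLinearMap.inr ℝ (EuclideanSpace ℝ (Fin n)) (EuclideanSpace ℝ (Fin m)))) v
        = (P j) (Df (0, v), 0) := rfl
    rw [e1, hB']
    have e2 : ((P j) ((-(A (W v))), (0 : EuclideanSpace ℝ (Fin m))))
        = ((P j).comp (ContinuousLinearMap.inl ℝ (EuclideanSpace ℝ (Fin n))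
            (EuclideanSpace ℝ (Fin m)))) (-(A (W v))) := rfl
    rw [e2, hPj]
    simp [pow_succ, ContinuousLinearMap.mul_apply]
  refine ⟨part1, part2, ?_⟩
  have hfd := part2 r hr le_rfl
  have hgr : gradient (fun u => lieD f h r (w us, u)) us
      = (InnerProductSpace.toDual ℝ (EuclideanSpace ℝ (Fin m))).symm
          (fderiv ℝ (fun u => lieD f h r (w us, u)) us) := rfl
  have hgh : ∀ z, ⟪gradient h (w us), z⟫ = fderiv ℝ h (w us) z := by
    intro z
    exact InnerProductSpace.toDual_symm_apply
  have hkey : fderiv ℝ (fun u => lieD f h r (w us, u)) us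
      = (InnerProductSpace.toDual ℝ (EuclideanSpace ℝ (Fin m)))
          (-(ContinuousLinearMap.adjoint W)
            ((ContinuousLinearMap.adjoint (A ^ r)) (gradient h (w us)))) := by
    rw [hfd]
    ext v
    simp only [ContinuousLinearMap.neg_apply, ContinuousLinearMap.comp_apply,
      InnerProductSpace.toDual_apply_apply, inner_neg_left,
      ContinuousLinearMap.adjoint_inner_left]
    rw [hgh]
  rw [hgr, hkey, LinearIsometryEquiv.symm_apply_apply]
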